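/- Let H be a real Hilbert space and a₁, a₂ : H × H → ℝ two bounded coercive symmetric bilinear forms with a₁(u,u) ≤ a₂(u,u) for all u. For ℓ ∈ H* let u₁, u₂ be the unique elements with aⱼ(uⱼ, v) = ℓ(v) for all v (Lax–Milgram). Then ℓ(u₂) ≤ ℓ(u₁). -/
import Mathlib

theorem lax_milgram_monotonicity
    {H : Type*} [NormedAddCommGroup H] [InnerProductSpace ℝ H] [CompleteSpace H]
    (a₁ a₂ : H →L[ℝ] H →L[ℝ] ℝ)
    (hsym₁ : ∀ u v : H, a₁ u v = a₁ v u) (hsym₂ : ∀ u v : H, a₂ u v = a₂ v u)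
    (c : ℝ) (hc : 0 < c)
    (hcoer₁ : ∀ u : H, c * ‖u‖ ^ 2 ≤ a₁ u u) (hcoer₂ : ∀ u : H, c * ‖u‖ ^ 2 ≤ a₂ u u)
    (hle : ∀ u : H, a₁ u u ≤ a₂ u u)
    (ℓ : H →L[ℝ] ℝ) (u₁ u₂ : H)
    (hu₁ : ∀ v : H, a₁ u₁ v = ℓ v) (hu₂ : ∀ v : H, a₂ u₂ v = ℓ v) :
    ℓ u₂ ≤ ℓ u₁ := by
  have hpos : (0:ℝ) ≤ a₁ (u₁ - u₂) (u₁ - u₂) := by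
    have := hcoer₁ (u₁ - u₂)
    nlinarith [sq_nonneg ‖u₁ - u₂‖]
  have hexp : a₁ (u₁ - u₂) (u₁ - u₂)
      = a₁ u₁ u₁ - 2 * a₁ u₁ u₂ + a₁ u₂ u₂ := by
    simp only [map_sub, ContinuousLinearMap.sub_apply]
    rw [hsym₁ u₂ u₁]
    ring
  have h1 : a₁ u₁ u₁ = ℓ u₁ := hu₁ u₁
  have h2 : a₁ u₁ u₂ = ℓ u₂ := hu₁ u₂
  have h3 : a₂ u₂ u₂ = ℓ u₂ := hu₂ u₂
  have h4 := hle u₂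
  linarith
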